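/- Let N ≥ 2 and y ∈ ℝ^N (or ℂ^N). Suppose J = {j : sin(y_j) = 0} has cardinality m ≥ 2. Then the kernel of the secular matrix A(y, η) has dimension exactly m − 1, for any η ∈ ℂ. -/
import Mathlib


open Complex Finset

lemma finrank_ker_aux {ι : Type*} [Fintype ι] (f : ((ι → ℂ)) →ₗ[ℂ] ℂ)
    (hf : Function.Surjective f) :
    Module.finrank ℂ (LinearMap.ker f) = Fintype.card ι - 1 := by
  have h := LinearMap.finrank_range_add_finrank_ker f
  rw [LinearMap.range_eq_top.mpr hf, finrank_top, Module.finrank_self,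
    Module.finrank_fintype_fun_eq_card] at h
  omega

/-- If `J = {j : sin(y_j) = 0}` has cardinality `m ≥ 2`, the kernel of the
secular matrix `A(y,η)` has dimension exactly `m − 1`, for every `η`. -/
theorem ker_dim_eq (N : ℕ) (hN : 2 ≤ N) (y : Fin N → ℝ) (η : ℂ)
    (m : ℕ) (hm : 2 ≤ m)
    (hJ : (Finset.univ.filter (fun j : Fin N => Real.sin (y j) = 0)).card = m)
    (A : Matrix (Fin N) (Fin N) ℂ)
    (hA : ∀ i j : Fin N, A i j =
      if (i : ℕ) + 1 < N then
        (if j = i then Complex.sin ((y i : ℝ) : ℂ)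
         else if (j : ℕ) = (i : ℕ) + 1 then -Complex.sin ((y j : ℝ) : ℂ) else 0)
      else
        (if (j : ℕ) + 1 = N then Complex.cos ((y j : ℝ) : ℂ) + η * Complex.sin ((y j : ℝ) : ℂ)
         else Complex.cos ((y j : ℝ) : ℂ))) :
    Module.finrank ℂ (LinearMap.ker A.mulVecLin) = m - 1 := by
  set J' : Finset (Fin N) := Finset.univ.filter (fun j : Fin N => Real.sin (y j) = 0) with hJ'def
  have hJm : J'.card = m := hJ
  have hJne : J'.Nonempty := by rw [← Finset.card_pos, hJm]; omega
  obtain ⟨j0, hj0⟩ := hJne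
  have hsin0 : ∀ j ∈ J', Complex.sin ((y j : ℝ) : ℂ) = 0 := by
    intro j hj
    have h : Real.sin (y j) = 0 := (Finset.mem_filter.mp hj).2
    rw [← Complex.ofReal_sin]; exact_mod_cast h
  have hcos : ∀ j ∈ J', Complex.cos ((y j : ℝ) : ℂ) ≠ 0 := by
    intro j hj
    have h : Real.sin (y j) = 0 := (Finset.mem_filter.mp hj).2
    have h2 := Real.sin_sq_add_cos_sq (y j)
    rw [h] at h2
    have h3 : Real.cos (y j) ≠ 0 := by nlinarith
    rw [← Complex.ofReal_cos]
    exact_mod_cast h3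
  have hsinne : ∀ j : Fin N, j ∉ J' → Complex.sin ((y j : ℝ) : ℂ) ≠ 0 := by
    intro j hj
    have h : Real.sin (y j) ≠ 0 := fun h =>
      hj (Finset.mem_filter.mpr ⟨Finset.mem_univ j, h⟩)
    rw [← Complex.ofReal_sin]
    exact_mod_cast h
  have hN1 : N - 1 < N := by omega
  set jN : Fin N := ⟨N - 1, hN1⟩ with hjNdef
  -- row computations
  have row1 : ∀ (x : Fin N → ℂ) (i : Fin N) (hi : (i : ℕ) + 1 < N),
      A.mulVec x i = Complex.sin ((y i : ℝ) : ℂ) * x i -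
        Complex.sin ((y ⟨(i : ℕ) + 1, hi⟩ : ℝ) : ℂ) * x ⟨(i : ℕ) + 1, hi⟩ := by
    intro x i hi
    have hmv : A.mulVec x i = ∑ j, A i j * x j := by
      simp [Matrix.mulVec, dotProduct]
    have key : ∀ j : Fin N, A i j * x j =
        (if j = i then Complex.sin ((y i : ℝ) : ℂ) * x i else 0) +
        (if j = (⟨(i : ℕ) + 1, hi⟩ : Fin N) then
          -(Complex.sin ((y ⟨(i : ℕ) + 1, hi⟩ : ℝ) : ℂ) * x ⟨(i : ℕ) + 1, hi⟩) else 0) := by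
      intro j
      rw [hA, if_pos hi]
      by_cases h1 : j = i
      · subst h1
        have h2 : j ≠ (⟨(j : ℕ) + 1, hi⟩ : Fin N) := by
          intro hh
          have := congrArg Fin.val hh
          simp at this
        simp [h2]
      · by_cases h2 : (j : ℕ) = (i : ℕ) + 1
        · have h3 : j = (⟨(i : ℕ) + 1, hi⟩ : Fin N) := Fin.ext h2
          subst h3
          simp [h1, h2]
        · have h3 : j ≠ (⟨(i : ℕ) + 1, hi⟩ : Fin N) := by
            intro hh; apply h2; rw [hh]
          simp [h1, h2, h3]
    rw [hmv, Finset.sum_congr rfl (fun j _ => key j), Finset.sum_add_distrib,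
      Finset.sum_ite_eq' Finset.univ i, Finset.sum_ite_eq' Finset.univ (⟨(i : ℕ) + 1, hi⟩ : Fin N)]
    simp
    ring
  have row2 : ∀ (x : Fin N → ℂ) (i : Fin N), ¬((i : ℕ) + 1 < N) →
      A.mulVec x i = (∑ j, Complex.cos ((y j : ℝ) : ℂ) * x j) +
        η * Complex.sin ((y jN : ℝ) : ℂ) * x jN := by
    intro x i hi
    have hmv : A.mulVec x i = ∑ j, A i j * x j := by
      simp [Matrix.mulVec, dotProduct]
    have key : ∀ j : Fin N, A i j * x j =
        Complex.cos ((y j : ℝ) : ℂ) * x j +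
        (if j = jN then η * Complex.sin ((y jN : ℝ) : ℂ) * x jN else 0) := by
      intro j
      rw [hA, if_neg hi]
      by_cases h : (j : ℕ) + 1 = N
      · have hj : j = jN := Fin.ext (by simp [hjNdef]; omega)
        subst hj
        rw [if_pos h, if_pos rfl]
        ring
      · have hj : j ≠ jN := by
          intro hh; apply h; rw [hh]; simp [hjNdef]; omega
        rw [if_neg h, if_neg hj, add_zero]
    rw [hmv, Finset.sum_congr rfl (fun j _ => key j), Finset.sum_add_distrib,
      Finset.sum_ite_eq' Finset.univ jN]
    simp
  -- characterization of the kernel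
  have hchar : ∀ x : Fin N → ℂ, A.mulVec x = 0 ↔
      ((∀ j, j ∉ J' → x j = 0) ∧ ∑ j ∈ J', Complex.cos ((y j : ℝ) : ℂ) * x j = 0) := by
    intro x
    constructor
    · intro hx
      have hz : ∀ j : Fin N, Complex.sin ((y j : ℝ) : ℂ) * x j = 0 := by
        set g : ℕ → ℂ := fun k =>
          if hk : k < N then Complex.sin ((y ⟨k, hk⟩ : ℝ) : ℂ) * x ⟨k, hk⟩ else 0 with hg
        have hstep : ∀ k, k + 1 < N → g (k + 1) = g k := by
          intro k hk
          have hk' : k < N := by omega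
          have h0 : A.mulVec x ⟨k, hk'⟩ = 0 := by
            rw [hx]; rfl
          rw [row1 x ⟨k, hk'⟩ hk] at h0
          have h1 := sub_eq_zero.mp h0
          simp only [hg]
          rw [dif_pos hk, dif_pos hk']
          exact h1.symm
        have hall : ∀ k, k < N → g k = g 0 := by
          intro k
          induction k with
          | zero => intro _; rfl
          | succ n ih => intro hk; rw [hstep n hk, ih (by omega)]
        have h0val : g (j0 : ℕ) = 0 := by
          simp only [hg]
          rw [dif_pos j0.isLt]
          have he : (⟨(j0 : ℕ), j0.isLt⟩ : Fin N) = j0 := by ext; rfl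
          rw [he, hsin0 j0 hj0, zero_mul]
        intro j
        have h1 : g (j : ℕ) = 0 := by
          rw [hall _ j.isLt, ← hall _ j0.isLt, h0val]
        simpa only [hg, dif_pos j.isLt, Fin.eta] using h1
      constructor
      · intro j hj
        exact (mul_eq_zero.mp (hz j)).resolve_left (hsinne j hj)
      · have hiN : ¬((jN : ℕ) + 1 < N) := by simp [hjNdef]; omega
        have h0 : A.mulVec x jN = 0 := by rw [hx]; rfl
        rw [row2 x jN hiN] at h0
        have h1 : η * Complex.sin ((y jN : ℝ) : ℂ) * x jN = 0 := by
          rw [mul_assoc, hz jN, mul_zero]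
        rw [h1, add_zero] at h0
        rw [← h0]
        apply Finset.sum_subset (Finset.subset_univ J')
        intro j _ hj
        rw [(mul_eq_zero.mp (hz j)).resolve_left (hsinne j hj), mul_zero]
    · rintro ⟨h1, h2⟩
      have hz : ∀ j : Fin N, Complex.sin ((y j : ℝ) : ℂ) * x j = 0 := by
        intro j
        by_cases hj : j ∈ J'
        · rw [hsin0 j hj, zero_mul]
        · rw [h1 j hj, mul_zero]
      funext i
      by_cases hi : (i : ℕ) + 1 < N
      · rw [Pi.zero_apply, row1 x i hi, hz, hz, sub_zero]
      · rw [Pi.zero_apply, row2 x i hi]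
        have hsum : ∑ j, Complex.cos ((y j : ℝ) : ℂ) * x j = 0 := by
          rw [← Finset.sum_subset (Finset.subset_univ J')
            (fun j _ hj => by rw [h1 j hj, mul_zero])]
          exact h2
        rw [hsum, zero_add, mul_assoc, hz jN, mul_zero]
  -- the linear functional on the J'-coordinates
  let f : ({j : Fin N // j ∈ J'} → ℂ) →ₗ[ℂ] ℂ :=
    { toFun := fun v => ∑ j : {j : Fin N // j ∈ J'}, Complex.cos ((y j.1 : ℝ) : ℂ) * v j
      map_add' := by
        intro v w
        simp [mul_add, Finset.sum_add_distrib]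
      map_smul' := by
        intro a v
        simp [Finset.mul_sum, mul_left_comm] }
  have hfsurj : Function.Surjective f := by
    intro z
    refine ⟨fun j => if j = ⟨j0, hj0⟩ then z / Complex.cos ((y j0 : ℝ) : ℂ) else 0, ?_⟩
    show (∑ j : {j : Fin N // j ∈ J'}, Complex.cos ((y j.1 : ℝ) : ℂ) *
      (if j = ⟨j0, hj0⟩ then z / Complex.cos ((y j0 : ℝ) : ℂ) else 0)) = z
    simp only [mul_ite, mul_zero]
    rw [Finset.sum_ite_eq' Finset.univ (⟨j0, hj0⟩ : {j : Fin N // j ∈ J'})]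
    simp
    field_simp [hcos j0 hj0]
  -- the equivalence between the two kernels
  let e : (LinearMap.ker A.mulVecLin) ≃ₗ[ℂ] (LinearMap.ker f) :=
    { toFun := fun x => ⟨fun j => x.1 j.1, by
        have hx : A.mulVec x.1 = 0 := by
          have := x.2
          rwa [LinearMap.mem_ker, Matrix.mulVecLin_apply] at this
        have h2 := ((hchar x.1).mp hx).2
        rw [LinearMap.mem_ker]
        show (∑ j : {j : Fin N // j ∈ J'}, Complex.cos ((y j.1 : ℝ) : ℂ) * x.1 j.1) = 0
        rw [Finset.sum_coe_sort J' (fun j => Complex.cos ((y j : ℝ) : ℂ) * x.1 j)]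
        exact h2⟩
      map_add' := fun x y => rfl
      map_smul' := fun a x => rfl
      invFun := fun v => ⟨fun j => if h : j ∈ J' then v.1 ⟨j, h⟩ else 0, by
        rw [LinearMap.mem_ker, Matrix.mulVecLin_apply]
        apply (hchar _).mpr
        constructor
        · intro j hj
          exact dif_neg hj
        · have hv := v.2
          rw [LinearMap.mem_ker] at hv
          have : (∑ j : {j : Fin N // j ∈ J'}, Complex.cos ((y j.1 : ℝ) : ℂ) * v.1 j) = 0 := hv
          rw [← Finset.sum_coe_sort J'
            (fun j => Complex.cos ((y j : ℝ) : ℂ) * (if h : j ∈ J' then v.1 ⟨j, h⟩ else 0))]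
          rw [← this]
          apply Finset.sum_congr rfl
          intro j _
          rw [dif_pos j.2]⟩
      left_inv := by
        intro x
        apply Subtype.ext
        funext j
        show (if h : j ∈ J' then x.1 j else 0) = x.1 j
        by_cases h : j ∈ J'
        · rw [dif_pos h]
        · rw [dif_neg h]
          have hx : A.mulVec x.1 = 0 := by
            have := x.2
            rwa [LinearMap.mem_ker, Matrix.mulVecLin_apply] at this
          exact (((hchar x.1).mp hx).1 j h).symm
      right_inv := by
        intro v
        apply Subtype.ext
        funext j
        show (if h : (j : Fin N) ∈ J' then v.1 ⟨j, h⟩ else 0) = v.1 j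
        rw [dif_pos j.2] }
  rw [e.finrank_eq, finrank_ker_aux f hfsurj, Fintype.card_coe, hJm]
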